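/- In the discrete-time SIS Markov chain, for every edge (i,j) and time t, the quantity q_ij(t) = P(X_i(t)=0, X_j(t)=1) satisfies q_ij(t+1) ≤ δ(1-δ) p_j(t) + (1-δ)(1-δ-β) q_ij(t) + βδ q_ji(t) + β(1+δ) ∑_{ℓ ∼ j, ℓ ≠ i} q_jℓ(t). -/

import Mathlib

open Finset

/-- One-step transition probability of the discrete-time SIS Markov chain on `G`:
given the current state `X`, each node updates independently; an infected node
recovers with probability `δ`; a susceptible node with `m` infected neighbors
becomes infected with probability `1 - (1-β)^m`. -/
def sisStep {n : ℕ} (G : SimpleGraph (Fin n)) [DecidableRel G.Adj] (β δ : ℝ)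
    (X Y : Fin n → Bool) : ℝ :=
  ∏ i : Fin n,
    if X i = true then (if Y i = true then 1 - δ else δ)
    else
      if Y i = true then
        1 - (1 - β) ^ ((G.neighborFinset i).filter fun j => X j = true).card
      else (1 - β) ^ ((G.neighborFinset i).filter fun j => X j = true).card

/-- Marginal probability of infection of node `i` under distribution `μ`. -/
def marg {n : ℕ} (μ : (Fin n → Bool) → ℝ) (i : Fin n) : ℝ :=
  ∑ X : Fin n → Bool, if X i = true then μ X else 0

/-- Pairwise probability that both `i` and `j` are infected under `μ`. -/
def pPair {n : ℕ} (μ : (Fin n → Bool) → ℝ) (i j : Fin n) : ℝ :=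
  ∑ X : Fin n → Bool, if X i = true ∧ X j = true then μ X else 0

/-- Probability that `i` is healthy and `j` is infected under `μ`. -/
def qPair {n : ℕ} (μ : (Fin n → Bool) → ℝ) (i j : Fin n) : ℝ :=
  ∑ X : Fin n → Bool, if X i = false ∧ X j = true then μ X else 0

section Aux

variable {n : ℕ} (G : SimpleGraph (Fin n)) [DecidableRel G.Adj] (β δ : ℝ)

def infCard (X : Fin n → Bool) (k : Fin n) : ℕ :=
  ((G.neighborFinset k).filter fun j => X j = true).card

def gNode (X : Fin n → Bool) (k : Fin n) (b : Bool) : ℝ :=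
  if X k = true then (if b = true then 1 - δ else δ)
  else if b = true then 1 - (1 - β) ^ infCard G X k else (1 - β) ^ infCard G X k

lemma sisStep_eq_prod (X Y : Fin n → Bool) :
    sisStep G β δ X Y = ∏ k : Fin n, gNode G β δ X k (Y k) := rfl

lemma gNode_sum (X : Fin n → Bool) (k : Fin n) :
    gNode G β δ X k true + gNode G β δ X k false = 1 := by
  cases h : X k <;> simp [gNode, h]

lemma sum_step_indicator (i j : Fin n) (hij : i ≠ j) (X : Fin n → Bool) :
    (∑ Y : Fin n → Bool, if Y i = false ∧ Y j = true then sisStep G β δ X Y else 0)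
      = gNode G β δ X i false * gNode G β δ X j true := by
  classical
  set g := gNode G β δ X with hg
  set h : Fin n → Bool → ℝ := fun k b =>
    if k = i then (if b = false then g k b else 0)
    else if k = j then (if b = true then g k b else 0) else g k b with hh
  have hrw : ∀ Y : Fin n → Bool,
      (if Y i = false ∧ Y j = true then sisStep G β δ X Y else 0)
        = ∏ k : Fin n, h k (Y k) := by
    intro Y
    by_cases hc : Y i = false ∧ Y j = true
    · rw [if_pos hc, sisStep_eq_prod]
      refine Finset.prod_congr rfl fun k _ => ?_
      by_cases hki : k = i
      · subst hki; simp [hh, hg, hc.1]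
      · by_cases hkj : k = j
        · subst hkj; simp [hh, hg, hc.2, hki]
        · simp [hh, hg, hki, hkj]
    · rw [if_neg hc]
      rcases not_and_or.mp hc with h1 | h2
      · rw [Bool.not_eq_false] at h1
        exact (Finset.prod_eq_zero (Finset.mem_univ i) (by simp [hh, h1])).symm
      · rw [Bool.not_eq_true] at h2
        exact (Finset.prod_eq_zero (Finset.mem_univ j)
          (by simp [hh, h2, Ne.symm hij])).symm
  calc (∑ Y : Fin n → Bool, if Y i = false ∧ Y j = true then sisStep G β δ X Y else 0)
      = ∑ Y : Fin n → Bool, ∏ k : Fin n, h k (Y k) :=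
        Finset.sum_congr rfl fun Y _ => hrw Y
    _ = ∏ k : Fin n, ∑ b : Bool, h k b := by
        rw [← Fintype.piFinset_univ, ← Finset.prod_univ_sum]
    _ = ∏ k : Fin n, (if k = i then g i false else if k = j then g j true else 1) := by
        refine Finset.prod_congr rfl fun k _ => ?_
        rw [Fintype.sum_bool]
        by_cases hki : k = i
        · subst hki; simp [hh]
        · by_cases hkj : k = j
          · subst hkj; simp [hh, hki]
          · simp only [hh, if_neg hki, if_neg hkj]
            exact gNode_sum G β δ X k
    _ = g i false * g j true := by
        rw [← Finset.mul_prod_erase _ _ (Finset.mem_univ i),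
          ← Finset.mul_prod_erase _ _
            (Finset.mem_erase.mpr ⟨Ne.symm hij, Finset.mem_univ j⟩)]
        rw [if_pos rfl, if_neg (Ne.symm hij), if_pos rfl]
        rw [Finset.prod_eq_one, mul_one]
        intro k hk
        rw [Finset.mem_erase, Finset.mem_erase] at hk
        rw [if_neg hk.2.1, if_neg hk.1]

lemma infCard_cast (X : Fin n → Bool) (k : Fin n) :
    (infCard G X k : ℝ) = ∑ l ∈ G.neighborFinset k, (if X l = true then (1:ℝ) else 0) := by
  rw [infCard, Finset.card_filter, Nat.cast_sum]
  exact Finset.sum_congr rfl fun l _ => by split_ifs <;> simp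

lemma pointwise (i j : Fin n) (hij : G.Adj i j)
    (hβ0 : 0 ≤ β) (hβ1 : β ≤ 1) (hδ0 : 0 ≤ δ) (hδ1 : δ ≤ 1) (X : Fin n → Bool) :
    gNode G β δ X i false * gNode G β δ X j true ≤
      (if X j = true then δ*(1-δ) else 0)
      + (if X i = false ∧ X j = true then (1-δ)*(1-δ-β) else 0)
      + (if X j = false ∧ X i = true then β*δ else 0)
      + β*(1+δ) * ∑ l ∈ (G.neighborFinset j).erase i,
          (if X j = false ∧ X l = true then (1:ℝ) else 0) := by
  have hb0 : (0:ℝ) ≤ 1 - β := by linarith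
  have hb1 : (1:ℝ) - β ≤ 1 := by linarith
  have hmem : i ∈ G.neighborFinset j := by
    rw [SimpleGraph.mem_neighborFinset]; exact hij.symm
  set S : ℝ := ∑ l ∈ (G.neighborFinset j).erase i, (if X l = true then (1:ℝ) else 0)
    with hSdef
  have hS0 : 0 ≤ S := Finset.sum_nonneg fun l _ => by positivity
  have hmj : (infCard G X j : ℝ) = (if X i = true then (1:ℝ) else 0) + S := by
    rw [infCard_cast, ← Finset.add_sum_erase _ _ hmem]
  have hbern : ∀ m : ℕ, 1 - (1-β)^m ≤ (m:ℝ) * β := by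
    intro m
    have := one_add_mul_le_pow (a := -β) (by linarith) m
    have h2 : (1:ℝ) + (m:ℝ) * (-β) ≤ (1 - β) ^ m := by
      rw [sub_eq_add_neg]; exact this
    nlinarith
  cases hXi : X i <;> cases hXj : X j <;>
    simp only [gNode, hXi, hXj, Bool.false_eq_true, Bool.true_eq_false, if_true, if_false,
      and_true, and_false, true_and, false_and, ite_false, ite_true, ite_self,
      Finset.sum_const_zero, mul_zero, add_zero, zero_add]
  · -- X i = false, X j = false
    rw [← hSdef]
    have hmjS : (infCard G X j : ℝ) = S := by rw [hmj, hXi]; simp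
    have h1 : (1-β)^(infCard G X i) ≤ 1 := pow_le_one₀ hb0 hb1
    have h2 : (0:ℝ) ≤ (1-β)^(infCard G X i) := pow_nonneg hb0 _
    have h3 : 1 - (1-β)^(infCard G X j) ≤ S * β := by
      have := hbern (infCard G X j); rw [hmjS] at this; linarith
    have h4 : (0:ℝ) ≤ 1 - (1-β)^(infCard G X j) := by
      have := pow_le_one₀ hb0 hb1 (n := infCard G X j); linarith
    nlinarith
  · -- X i = false, X j = true
    have hmi : 1 ≤ infCard G X i := by
      refine Finset.card_pos.mpr ⟨j, ?_⟩
      rw [Finset.mem_filter, SimpleGraph.mem_neighborFinset]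
      exact ⟨hij, hXj⟩
    have h1 : (1-β)^(infCard G X i) ≤ (1-β)^1 :=
      pow_le_pow_of_le_one hb0 hb1 hmi
    nlinarith [pow_nonneg hb0 (infCard G X i)]
  · -- X i = true, X j = false
    rw [← hSdef]
    have hmjS : (infCard G X j : ℝ) = 1 + S := by rw [hmj, hXi]; simp
    have h3 : 1 - (1-β)^(infCard G X j) ≤ (1 + S) * β := by
      have := hbern (infCard G X j); rw [hmjS] at this; linarith
    have h4 : (0:ℝ) ≤ 1 - (1-β)^(infCard G X j) := by
      have := pow_le_one₀ hb0 hb1 (n := infCard G X j); linarith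
    nlinarith
  · -- X i = true, X j = true
    exact le_rfl

end Aux
theorem stmt11 {n : ℕ} (G : SimpleGraph (Fin n)) [DecidableRel G.Adj]
    (β δ : ℝ) (hβ0 : 0 ≤ β) (hβ1 : β ≤ 1) (hδ0 : 0 ≤ δ) (hδ1 : δ ≤ 1)
    (μ : ℕ → (Fin n → Bool) → ℝ)
    (hnn : ∀ t X, 0 ≤ μ t X)
    (hsum : ∀ t, ∑ X : Fin n → Bool, μ t X = 1)
    (hstep : ∀ t Y, μ (t + 1) Y = ∑ X : Fin n → Bool, μ t X * sisStep G β δ X Y)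
    (t : ℕ) (i j : Fin n) (hij : G.Adj i j) :
    qPair (μ (t + 1)) i j ≤
      δ * (1 - δ) * marg (μ t) j + (1 - δ) * (1 - δ - β) * qPair (μ t) i j +
        β * δ * qPair (μ t) j i +
        β * (1 + δ) * ∑ l ∈ (G.neighborFinset j).erase i, qPair (μ t) j l := by
  classical
  have hne : i ≠ j := hij.ne
  have step1 : qPair (μ (t + 1)) i j
      = ∑ X : Fin n → Bool, μ t X * (gNode G β δ X i false * gNode G β δ X j true) := by
    rw [qPair]
    have h1 : ∀ Y : Fin n → Bool,
        (if Y i = false ∧ Y j = true then μ (t+1) Y else 0)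
          = ∑ X : Fin n → Bool,
              (if Y i = false ∧ Y j = true then μ t X * sisStep G β δ X Y else 0) := by
      intro Y; by_cases h : Y i = false ∧ Y j = true <;> simp [hstep, h]
    rw [Finset.sum_congr rfl fun Y _ => h1 Y, Finset.sum_comm]
    refine Finset.sum_congr rfl fun X _ => ?_
    rw [← sum_step_indicator G β δ i j hne X, Finset.mul_sum]
    refine Finset.sum_congr rfl fun Y _ => ?_
    split_ifs <;> simp
  rw [step1]
  have step2 : ∀ X : Fin n → Bool,
      μ t X * (gNode G β δ X i false * gNode G β δ X j true)
      ≤ μ t X * ((if X j = true then δ*(1-δ) else 0)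
        + (if X i = false ∧ X j = true then (1-δ)*(1-δ-β) else 0)
        + (if X j = false ∧ X i = true then β*δ else 0)
        + β*(1+δ) * ∑ l ∈ (G.neighborFinset j).erase i,
            (if X j = false ∧ X l = true then (1:ℝ) else 0)) :=
    fun X => mul_le_mul_of_nonneg_left (pointwise G β δ i j hij hβ0 hβ1 hδ0 hδ1 X) (hnn t X)
  refine le_trans (Finset.sum_le_sum fun X _ => step2 X) (le_of_eq ?_)
  simp only [mul_add]
  rw [Finset.sum_add_distrib, Finset.sum_add_distrib, Finset.sum_add_distrib]
  congr 1
  · congr 1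
    · congr 1
      · rw [marg, Finset.mul_sum]
        exact Finset.sum_congr rfl fun X _ => by split_ifs <;> ring
      · rw [qPair, Finset.mul_sum]
        exact Finset.sum_congr rfl fun X _ => by split_ifs <;> ring
    · rw [qPair, Finset.mul_sum]
      exact Finset.sum_congr rfl fun X _ => by split_ifs <;> ring
  · simp only [Finset.mul_sum]
    rw [Finset.sum_comm]
    refine Finset.sum_congr rfl fun l _ => ?_
    rw [qPair, Finset.mul_sum]
    refine Finset.sum_congr rfl fun X _ => ?_
    split_ifs <;> ring
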